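/- Let A, B be n×n complex matrices with B invertible, and let X, Y : ℝ → Mₙ(ℂ) be differentiable functions satisfying the coupled system X′ + A·X + conj(B)·Y = 0 and Y′ + conj(A)·Y + B·X = 0, with F = A + conj(B·A·B⁻¹) and G = conj(B·A·B⁻¹)·A − conj(B)·B. Then Y is twice differentiable and satisfies Y″ + conj(F)·Y′ + conj(G)·Y = 0. -/

import Mathlib

open Matrix

attribute [local instance] Matrix.normedAddCommGroup Matrix.normedSpace

private lemma mul_hasDerivAt {n : ℕ} (M : Matrix (Fin n) (Fin n) ℂ)
    {f : ℝ → Matrix (Fin n) (Fin n) ℂ} {f' : Matrix (Fin n) (Fin n) ℂ} {t : ℝ}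
    (hf : HasDerivAt f f' t) :
    HasDerivAt (fun s => M * f s) (M * f') t := by
  have := ((LinearMap.mulLeft ℝ M).toContinuousLinearMap.hasFDerivAt
    (x := f t)).comp_hasDerivAt t hf
  exact this

private lemma alg_identity {n : ℕ} (A B A' B' Yt Xt : Matrix (Fin n) (Fin n) ℂ)
    (hBi : B⁻¹ * B = 1) :
    -(A' * -(A' * Yt + B * Xt) + B * -(A * Xt + B' * Yt))
      + (A' + B * A * B⁻¹) * -(A' * Yt + B * Xt)
      + (B * A * B⁻¹ * A' - B * B') * Yt = 0 := by
  have e : ∀ Z : Matrix (Fin n) (Fin n) ℂ, B⁻¹ * (B * Z) = Z := fun Z => by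
    rw [← mul_assoc, hBi, one_mul]
  simp only [mul_neg, neg_add, mul_add, add_mul, sub_mul, neg_neg, mul_assoc, e]
  abel

/-- If `X, Y : ℝ → Mₙ(ℂ)` are differentiable and solve the coupled system
`X' + A X + conj(B) Y = 0`, `Y' + conj(A) Y + B X = 0` with `B` invertible, and
`F = A + conj(BAB⁻¹)`, `G = conj(BAB⁻¹) A - conj(B) B`, then `Y` is twice differentiable
and satisfies `Y'' + conj(F) Y' + conj(G) Y = 0`. -/
theorem second_order_reduction_Y
    (n : ℕ) (A B : Matrix (Fin n) (Fin n) ℂ) (hB : IsUnit B)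
    (X Y : ℝ → Matrix (Fin n) (Fin n) ℂ)
    (hX : Differentiable ℝ X) (hY : Differentiable ℝ Y)
    (h1 : ∀ t : ℝ, deriv X t + A * X t + B.map (starRingEnd ℂ) * Y t = 0)
    (h2 : ∀ t : ℝ, deriv Y t + A.map (starRingEnd ℂ) * Y t + B * X t = 0) :
    let F := A + (B * A * B⁻¹).map (starRingEnd ℂ)
    let G := (B * A * B⁻¹).map (starRingEnd ℂ) * A - B.map (starRingEnd ℂ) * B
    Differentiable ℝ (deriv Y) ∧
    ∀ t : ℝ, deriv (deriv Y) t
        + F.map (starRingEnd ℂ) * deriv Y t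
        + G.map (starRingEnd ℂ) * Y t = 0 := by
  intro F G
  have hBi : B⁻¹ * B = 1 :=
    Matrix.nonsing_inv_mul B ((Matrix.isUnit_iff_isUnit_det B).mp hB)
  -- deriv Y as an explicit function
  have dY : ∀ t, deriv Y t = -(A.map (starRingEnd ℂ) * Y t + B * X t) := by
    intro t
    have h := h2 t
    rw [add_assoc] at h
    exact eq_neg_of_add_eq_zero_left h
  have dX : ∀ t, deriv X t = -(A * X t + B.map (starRingEnd ℂ) * Y t) := by
    intro t
    have h := h1 t
    rw [add_assoc] at h
    exact eq_neg_of_add_eq_zero_left h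
  have hDY : deriv Y = fun t => -(A.map (starRingEnd ℂ) * Y t + B * X t) := funext dY
  -- differentiability of deriv Y
  have hdiff : Differentiable ℝ (deriv Y) := by
    rw [hDY]
    intro t
    exact (((mul_hasDerivAt (A.map (starRingEnd ℂ)) (hY t).hasDerivAt).add
      (mul_hasDerivAt B (hX t).hasDerivAt)).neg).differentiableAt
  refine ⟨hdiff, fun t => ?_⟩
  -- second derivative
  have hdd : HasDerivAt (deriv Y) (-(A.map (starRingEnd ℂ) * deriv Y t + B * deriv X t)) t := by
    have h : HasDerivAt (fun t => -(A.map (starRingEnd ℂ) * Y t + B * X t))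
        (-(A.map (starRingEnd ℂ) * deriv Y t + B * deriv X t)) t :=
      ((mul_hasDerivAt (A.map (starRingEnd ℂ)) (hY t).hasDerivAt).add
      (mul_hasDerivAt B (hX t).hasDerivAt)).neg
    rw [← hDY] at h
    exact h
  have hdd' : deriv (deriv Y) t = -(A.map (starRingEnd ℂ) * deriv Y t + B * deriv X t) := hdd.deriv
  -- conjugates of F and G
  have hcc : ∀ M : Matrix (Fin n) (Fin n) ℂ, (M.map (starRingEnd ℂ)).map (starRingEnd ℂ) = M := by
    intro M; ext i j; simp
  have hadd : ∀ M N : Matrix (Fin n) (Fin n) ℂ,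
      (M + N).map (starRingEnd ℂ) = M.map (starRingEnd ℂ) + N.map (starRingEnd ℂ) := by
    intro M N; ext i j; simp
  have hsub : ∀ M N : Matrix (Fin n) (Fin n) ℂ,
      (M - N).map (starRingEnd ℂ) = M.map (starRingEnd ℂ) - N.map (starRingEnd ℂ) := by
    intro M N; ext i j; simp
  have hF : F.map (starRingEnd ℂ) = A.map (starRingEnd ℂ) + B * A * B⁻¹ := by
    show (A + (B * A * B⁻¹).map (starRingEnd ℂ)).map (starRingEnd ℂ) = _
    rw [hadd, hcc]
  have hG : G.map (starRingEnd ℂ) = B * A * B⁻¹ * A.map (starRingEnd ℂ) - B * B.map (starRingEnd ℂ) := by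
    show ((B * A * B⁻¹).map (starRingEnd ℂ) * A - B.map (starRingEnd ℂ) * B).map (starRingEnd ℂ) = _
    rw [hsub]; simp only [Matrix.map_mul, hcc]
  rw [hdd', hF, hG, dY t, dX t]
  exact alg_identity A B (A.map (starRingEnd ℂ)) (B.map (starRingEnd ℂ)) (Y t) (X t) hBi
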